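/- arXiv:2407.19771 — 2 statements merged into one kernel-verified Lean document; each statement's English description precedes it below -/
import Mathlib

section
/- Let G be a finite group and let S1 and S2 be two distinct cyclic subgroups of G, with generator sets T_{S1} = {x ∈ G : ⟨x⟩ = S1} and T_{S2} = {x ∈ G : ⟨x⟩ = S2}. If some element of T_{S1} is adjacent in the power graph P(G) to some element of T_{S2}, then every element of T_{S1} is adjacent in P(G) to every element of T_{S2}. -/
/-- The power graph of a group `G`: distinct vertices `x` and `y` are adjacent iff
one is an (integral) power of the other, i.e. `x ∈ ⟨y⟩` or `y ∈ ⟨x⟩`. -/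
def powerGraph (G : Type*) [Group G] : SimpleGraph G where
  Adj x y := x ≠ y ∧ (x ∈ Subgroup.zpowers y ∨ y ∈ Subgroup.zpowers x)
  symm := by
    constructor
    intro x y h
    exact ⟨h.1.symm, h.2.symm⟩
  loopless := by
    constructor
    intro x h
    exact h.1 rfl

/-- If some element of the generator set of a cyclic subgroup `S1` is adjacent in the
power graph to some element of the generator set of a distinct cyclic subgroup `S2`,
then every element of the generator set of `S1` is adjacent to every element of the
generator set of `S2`. -/
theorem power_graph_generator_sets_adjacency {G : Type*} [Group G] [Finite G]
    (S1 S2 : Subgroup G) (hS1 : IsCyclic S1) (hS2 : IsCyclic S2) (hne : S1 ≠ S2)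
    (h : ∃ x y : G, Subgroup.zpowers x = S1 ∧ Subgroup.zpowers y = S2 ∧
      (powerGraph G).Adj x y) :
    ∀ x y : G, Subgroup.zpowers x = S1 → Subgroup.zpowers y = S2 →
      (powerGraph G).Adj x y := by
  obtain ⟨x0, y0, hx0, hy0, hadj⟩ := h
  have key : S1 ≤ S2 ∨ S2 ≤ S1 := by
    rcases hadj.2 with h1 | h1
    · exact Or.inl (hx0 ▸ hy0 ▸ (Subgroup.zpowers_le).mpr h1)
    · exact Or.inr (hy0 ▸ hx0 ▸ (Subgroup.zpowers_le).mpr h1)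
  intro x y hx hy
  refine ⟨fun hxy => hne (hx ▸ hy ▸ hxy ▸ rfl), ?_⟩
  rcases key with hle | hle
  · exact Or.inl (hy ▸ hle (hx ▸ Subgroup.mem_zpowers x))
  · exact Or.inr (hx ▸ hle (hy ▸ Subgroup.mem_zpowers y))
end

section
/- Let m and n be positive integers with m dividing n, and let G = Z_m × Z_n. Then (X + 1)^α divides the characteristic polynomial of the adjacency matrix of the power graph P(G), where α = Σ_{d ∣ n} c_d·(φ(d) − 1) and c_d denotes the number of cyclic subgroups of G of order d. -/
open Polynomial

/-- The power graph of an additive group `G`: distinct vertices `x` and `y` are adjacent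
iff one is an (integral) multiple of the other, i.e. `x ∈ ⟨y⟩` or `y ∈ ⟨x⟩`. -/
def addPowerGraph (G : Type*) [AddGroup G] : SimpleGraph G where
  Adj x y := x ≠ y ∧ (x ∈ AddSubgroup.zmultiples y ∨ y ∈ AddSubgroup.zmultiples x)
  symm := by
    refine ⟨fun x y h => ?_⟩
    exact ⟨h.1.symm, h.2.symm⟩
  loopless := by
    refine ⟨fun x h => ?_⟩
    exact h.1 rfl

open Classical in
/-- The adjacency matrix (over `ℤ`) of a finite simple graph. -/
noncomputable def adjMat {V : Type*} [Fintype V] (G : SimpleGraph V) : Matrix V V ℤ :=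
  fun i j => if G.Adj i j then 1 else 0

/-- The number of cyclic subgroups of order `d` of an additive group `G`. -/
noncomputable def numCyclicSubgroups (G : Type*) [AddGroup G] (d : ℕ) : ℕ :=
  Nat.card {H : AddSubgroup G // IsAddCyclic H ∧ Nat.card H = d}

namespace PGAux

open AddSubgroup Finset

section Det

variable {V R : Type*} [DecidableEq V] [Fintype V] [CommRing R]

lemma det_dvd_aux (S : Finset V) : ∀ (M : Matrix V V R) (c : R) (r : V → V),
    (∀ u ∈ S, r u ∉ S) →
    (∀ u ∈ S, ∀ j, M u j - M (r u) j
        = c * ((if u = j then 1 else 0) - (if r u = j then 1 else 0))) →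
    c ^ S.card ∣ M.det := by
  induction S using Finset.induction_on with
  | empty => intro M c r _ _; simp
  | @insert u S' hu ih =>
    intro M c r hr hrow
    have hmem : u ∈ insert u S' := Finset.mem_insert_self u S'
    have hru : r u ≠ u := fun h => hr u hmem (by rw [h]; exact hmem)
    set v : V → R := fun j => (if u = j then 1 else 0) - (if r u = j then 1 else 0) with hv
    have h1 : M.det = (M.updateRow u (M u + (-1 : R) • M (r u))).det :=
      (Matrix.det_updateRow_add_smul_self M (Ne.symm hru) (-1)).symm
    have hrowv : M u + (-1 : R) • M (r u) = c • v := by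
      funext j
      simp only [Pi.add_apply, Pi.smul_apply, smul_eq_mul, hv]
      have := hrow u hmem j
      linear_combination this
    have h2 : M.det = c * (M.updateRow u v).det := by
      rw [h1, hrowv, Matrix.det_updateRow_smul]
    have h3 : c ^ S'.card ∣ (M.updateRow u v).det := by
      refine ih (M.updateRow u v) c r ?_ ?_
      · intro w hw
        exact fun hrw => hr w (Finset.mem_insert_of_mem hw) (Finset.mem_insert_of_mem hrw)
      · intro w hw j
        have hwu : w ≠ u := fun h => hu (h ▸ hw)
        have hrwu : r w ≠ u := by
          intro h
          exact hr w (Finset.mem_insert_of_mem hw) (h ▸ hmem)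
        rw [Matrix.updateRow_ne hwu, Matrix.updateRow_ne hrwu]
        exact hrow w (Finset.mem_insert_of_mem hw) j
    rw [Finset.card_insert_of_notMem hu, pow_succ, h2, mul_comm (c ^ S'.card) c]
    exact mul_dvd_mul_left c h3

end Det

section Rep

variable {G : Type*} [AddGroup G]

open Classical in
/-- A choice of generator for each cyclic subgroup. -/
noncomputable def genOf (H : AddSubgroup G) : G :=
  if h : ∃ y : G, zmultiples y = H then h.choose else 0

lemma zmultiples_genOf {H : AddSubgroup G} (h : ∃ y : G, zmultiples y = H) :
    zmultiples (genOf H) = H := by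
  rw [genOf, dif_pos h]
  exact h.choose_spec

/-- The canonical representative generating the same cyclic subgroup as `x`. -/
noncomputable def rep (x : G) : G := genOf (zmultiples x)

lemma zmultiples_rep (x : G) : zmultiples (rep x) = zmultiples x :=
  zmultiples_genOf ⟨x, rfl⟩

lemma rep_eq_rep {x y : G} (h : zmultiples x = zmultiples y) : rep x = rep y := by
  unfold rep; rw [h]

lemma rep_rep (x : G) : rep (rep x) = rep x := rep_eq_rep (zmultiples_rep x)

lemma addOrderOf_rep (x : G) : addOrderOf (rep x) = addOrderOf x := by
  rw [← Nat.card_zmultiples, ← Nat.card_zmultiples x, zmultiples_rep]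

lemma isAddCyclic_zmultiples (x : G) : IsAddCyclic (zmultiples x) := by
  refine ⟨⟨x, mem_zmultiples x⟩, ?_⟩
  rintro ⟨y, hy⟩
  obtain ⟨k, hk⟩ := mem_zmultiples_iff.mp hy
  exact ⟨k, Subtype.ext (by simpa using hk)⟩

lemma exists_zmultiples_eq {H : AddSubgroup G} (h : IsAddCyclic H) :
    ∃ g : G, zmultiples g = H := by
  obtain ⟨⟨g, hgH⟩, hg⟩ := h
  refine ⟨g, le_antisymm (zmultiples_le_of_mem hgH) ?_⟩
  intro y hy
  obtain ⟨k, hk⟩ := mem_zmultiples_iff.mp (hg ⟨y, hy⟩)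
  exact mem_zmultiples_iff.mpr ⟨k, by simpa using congrArg Subtype.val hk⟩

end Rep

section Count

variable {G : Type*} [AddGroup G] [Fintype G]

lemma zmultiples_eq_of_le_of_orderOf_eq {x y : G} (h : x ∈ zmultiples y)
    (ho : addOrderOf x = addOrderOf y) : zmultiples x = zmultiples y := by
  refine AddSubgroup.eq_of_le_of_card_ge (zmultiples_le_of_mem h) ?_
  rw [Nat.card_zmultiples, Nat.card_zmultiples, ho]

/-- The number of generators of `zmultiples y` is `φ (addOrderOf y)`. -/
lemma card_gen (y : G) [DecidablePred fun x : G => zmultiples x = zmultiples y] :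
    (univ.filter fun x : G => zmultiples x = zmultiples y).card
      = (addOrderOf y).totient := by
  classical
  have hfe : (univ.filter fun x : G => zmultiples x = zmultiples y)
      = (univ.filter fun x : G => x ∈ zmultiples y ∧ addOrderOf x = addOrderOf y) := by
    ext x
    simp only [mem_filter, mem_univ, true_and]
    constructor
    · intro h
      refine ⟨h ▸ mem_zmultiples x, ?_⟩
      rw [← Nat.card_zmultiples, ← Nat.card_zmultiples y, h]
    · exact fun ⟨h1, h2⟩ => zmultiples_eq_of_le_of_orderOf_eq h1 h2
  rw [hfe]
  haveI : IsAddCyclic (zmultiples y) := isAddCyclic_zmultiples y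
  have hcard : Fintype.card (zmultiples y) = addOrderOf y := by
    rw [← Nat.card_eq_fintype_card, Nat.card_zmultiples]
  have h2 : (univ.filter fun a : zmultiples y => addOrderOf a = addOrderOf y).card
      = (addOrderOf y).totient :=
    IsAddCyclic.card_addOrderOf_eq_totient (hcard ▸ dvd_rfl)
  rw [← h2]
  apply Finset.card_bij (fun x hx => (⟨x, (mem_filter.mp hx).2.1⟩ : zmultiples y))
  · intro x hx
    simp only [mem_filter, mem_univ, true_and] at hx ⊢
    rw [AddSubgroup.addOrderOf_mk]
    exact hx.2
  · intro a ha b hb hab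
    exact congrArg Subtype.val hab
  · intro b hb
    simp only [mem_filter, mem_univ, true_and] at hb
    exact ⟨b.1, mem_filter.mpr ⟨mem_univ _, b.2,
      by rw [AddSubgroup.addOrderOf_coe]; exact hb⟩, rfl⟩

lemma nat_card_subtype {α : Type*} [Fintype α] (p : α → Prop) [DecidablePred p] :
    Nat.card {x // p x} = (univ.filter p).card := by
  rw [Nat.card_eq_fintype_card, Fintype.card_subtype]

/-- The number of cyclic subgroups of order `d` equals the number of fixed
representatives of order `d`. -/
lemma numCyclic_eq (d : ℕ) [DecidablePred fun x : G => rep x = x ∧ addOrderOf x = d] :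
    numCyclicSubgroups G d
      = (univ.filter fun x : G => rep x = x ∧ addOrderOf x = d).card := by
  rw [← nat_card_subtype]
  refine Nat.card_congr ?_
  refine
    { toFun := fun H => ⟨genOf H.1, ?_, ?_⟩
      invFun := fun x => ⟨zmultiples x.1, isAddCyclic_zmultiples _,
        by rw [Nat.card_zmultiples]; exact x.2.2⟩
      left_inv := ?_
      right_inv := ?_ }
  · show genOf (zmultiples (genOf H.1)) = genOf H.1
    rw [zmultiples_genOf (exists_zmultiples_eq H.2.1)]
  · rw [← Nat.card_zmultiples, zmultiples_genOf (exists_zmultiples_eq H.2.1)]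
    exact H.2.2
  · intro H
    exact Subtype.ext (zmultiples_genOf (exists_zmultiples_eq H.2.1))
  · intro x
    exact Subtype.ext x.2.1

/-- The number of elements of order `d` is `F_d * φ d`. -/
lemma card_orderOf_eq (d : ℕ) [DecidablePred fun x : G => addOrderOf x = d]
    [DecidablePred fun x : G => rep x = x ∧ addOrderOf x = d] :
    (univ.filter fun x : G => addOrderOf x = d).card
      = (univ.filter fun x : G => rep x = x ∧ addOrderOf x = d).card * d.totient := by
  classical
  rw [Finset.card_eq_sum_card_fiberwise (f := rep)
    (t := univ.filter fun x : G => rep x = x ∧ addOrderOf x = d)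
    (fun x hx => by
      simp only [mem_coe, mem_filter, mem_univ, true_and] at hx ⊢
      exact ⟨rep_rep x, by rw [addOrderOf_rep]; exact hx⟩)]
  rw [Finset.sum_congr rfl (fun y hy => ?_), Finset.sum_const, smul_eq_mul, mul_comm]
  simp only [mem_filter, mem_univ, true_and] at hy
  have hfib : ((univ.filter fun x : G => addOrderOf x = d).filter fun x => rep x = y)
      = univ.filter fun x : G => zmultiples x = zmultiples y := by
    ext x
    simp only [mem_filter, mem_univ, true_and]
    constructor
    · rintro ⟨hord, hrx⟩
      rw [← zmultiples_rep x, hrx]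
    · intro h
      constructor
      · rw [← Nat.card_zmultiples, h, Nat.card_zmultiples, hy.2]
      · rw [rep_eq_rep h, hy.1]
  rw [hfib, card_gen y, hy.2]

lemma aux_arith {a c t : ℕ} (h : c + a = c * t) : a = c * (t - 1) := by
  have h2 : c * (t - 1) = c * t - c := by rw [mul_tsub, mul_one]
  rw [h2, ← h, Nat.add_sub_cancel_left]

/-- The main count: the number of non-representatives. -/
lemma card_S {n : ℕ} (hn : n ≠ 0) (hexp : ∀ x : G, addOrderOf x ∣ n)
    [DecidablePred fun x : G => rep x ≠ x] :
    (univ.filter fun x : G => rep x ≠ x).card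
      = ∑ d ∈ n.divisors,
          (Nat.card {H : AddSubgroup G // IsAddCyclic H ∧ Nat.card H = d})
            * (d.totient - 1) := by
  classical
  rw [Finset.card_eq_sum_card_fiberwise (f := addOrderOf) (t := n.divisors)
    (fun x _ => Nat.mem_divisors.mpr ⟨hexp x, hn⟩)]
  refine Finset.sum_congr rfl fun d hd => ?_
  have hc : numCyclicSubgroups G d
      = (univ.filter fun x : G => rep x = x ∧ addOrderOf x = d).card := numCyclic_eq d
  set Fd := (univ.filter fun x : G => rep x = x ∧ addOrderOf x = d).card with hFd
  have htot : 1 ≤ d.totient := Nat.totient_pos.mpr (Nat.pos_of_mem_divisors hd)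
  have hsplit : Fd
        + ((univ.filter fun x : G => rep x ≠ x).filter fun x => addOrderOf x = d).card
      = (univ.filter fun x : G => addOrderOf x = d).card := by
    rw [hFd]
    have h1 : (univ.filter fun x : G => rep x = x ∧ addOrderOf x = d)
        = (univ.filter fun x : G => addOrderOf x = d).filter fun x => rep x = x := by
      rw [Finset.filter_filter]
      exact Finset.filter_congr fun x _ => by tauto
    have h2 : ((univ.filter fun x : G => rep x ≠ x).filter fun x => addOrderOf x = d)
        = (univ.filter fun x : G => addOrderOf x = d).filter fun x => ¬ rep x = x := by
      rw [Finset.filter_filter, Finset.filter_filter]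
      exact Finset.filter_congr fun x _ => by tauto
    rw [h1, h2]
    exact Finset.card_filter_add_card_filter_not _
  have hEd := card_orderOf_eq (G := G) d
  show _ = numCyclicSubgroups G d * (d.totient - 1)
  rw [hc]
  exact aux_arith (hsplit.trans hEd)

end Count

end PGAux

open PGAux AddSubgroup Finset in
/-- If `m ∣ n`, then `(X + 1) ^ α` divides the characteristic polynomial of the
adjacency matrix of the power graph of `Z_m × Z_n`, where
`α = Σ_{d ∣ n} c_d (φ(d) - 1)` with `c_d` the number of cyclic subgroups of order `d`. -/
theorem charpoly_power_graph_dvd (m n : ℕ) [NeZero m] [NeZero n] (hmn : m ∣ n) :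
    ((X : Polynomial ℤ) + 1) ^
        (∑ d ∈ n.divisors, numCyclicSubgroups (ZMod m × ZMod n) d * (Nat.totient d - 1)) ∣
      Matrix.charpoly (adjMat (addPowerGraph (ZMod m × ZMod n))) := by
  classical
  set G := (ZMod m × ZMod n) with hG
  set A := adjMat (addPowerGraph G) with hA
  set S : Finset G := univ.filter fun x => rep x ≠ x with hS
  -- every element has order dividing n
  have hexp : ∀ x : G, addOrderOf x ∣ n := by
    intro x
    apply addOrderOf_dvd_of_nsmul_eq_zero
    have h1 : n • x.1 = 0 := by
      rw [nsmul_eq_mul]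
      obtain ⟨k, rfl⟩ := hmn
      push_cast
      rw [ZMod.natCast_self]
      ring
    have h2 : n • x.2 = 0 := by
      rw [nsmul_eq_mul, ZMod.natCast_self, zero_mul]
    exact Prod.ext h1 h2
  -- adjacency facts
  have hAdj : ∀ x y : G, (addPowerGraph G).Adj x y
      ↔ x ≠ y ∧ (x ∈ zmultiples y ∨ y ∈ zmultiples x) := fun _ _ => Iff.rfl
  -- the matrix divisibility
  have hdvd : ((X : Polynomial ℤ) + 1) ^ S.card ∣ (Matrix.charmatrix A).det := by
    apply det_dvd_aux S (Matrix.charmatrix A) (X + 1) rep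
    · intro u hu
      simp only [hS, mem_filter, mem_univ, true_and, not_not] at hu ⊢
      exact rep_rep u
    · intro u hu j
      simp only [hS, mem_filter, mem_univ, true_and] at hu
      set s := rep u with hs
      have hzm : zmultiples s = zmultiples u := zmultiples_rep u
      have hsu : s ≠ u := hu
      have hAus : A u s = 1 := by
        rw [hA, adjMat, if_pos]
        exact ⟨hsu.symm, Or.inl (hzm ▸ mem_zmultiples u)⟩
      have hAsu : A s u = 1 := by
        rw [hA, adjMat, if_pos]
        exact ⟨hsu, Or.inl (hzm ▸ mem_zmultiples s)⟩
      by_cases hju : j = u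
      · rw [hju, Matrix.charmatrix_apply_eq, Matrix.charmatrix_apply_ne _ _ _ hsu]
        have hAu : A u u = 0 := by
          rw [hA, adjMat, if_neg]
          exact fun h => h.1 rfl
        rw [hAu, hAsu]
        simp only [if_pos rfl, if_neg hsu, if_true, eq_self_iff_true, map_zero, map_one]
        ring
      · by_cases hjs : j = s
        · rw [hjs, Matrix.charmatrix_apply_ne _ _ _ (Ne.symm hsu),
            Matrix.charmatrix_apply_eq]
          have hAs : A s s = 0 := by
            rw [hA, adjMat, if_neg]
            exact fun h => h.1 rfl
          rw [hAs, hAus]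
          simp only [if_neg (Ne.symm hsu), if_pos rfl, if_true, eq_self_iff_true, map_zero, map_one]
          ring
        · rw [Matrix.charmatrix_apply_ne _ _ _ (fun h => hju h.symm),
            Matrix.charmatrix_apply_ne _ _ _ (fun h => hjs h.symm)]
          have hAeq : A u j = A s j := by
            rw [hA, adjMat]
            congr 1
            simp only [eq_iff_iff]
            constructor
            · rintro ⟨hne, h | h⟩
              · exact ⟨fun h' => hjs h'.symm,
                  Or.inl (zmultiples_le.mp (hzm ▸ zmultiples_le_of_mem h))⟩
              · exact ⟨fun h' => hjs h'.symm, Or.inr (hzm ▸ h)⟩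
            · rintro ⟨hne, h | h⟩
              · exact ⟨fun h' => hju h'.symm,
                  Or.inl (zmultiples_le.mp (hzm ▸ zmultiples_le_of_mem h))⟩
              · exact ⟨fun h' => hju h'.symm, Or.inr (hzm ▸ h)⟩
          rw [hAeq]
          simp only [if_neg (fun h : u = j => hju h.symm),
            if_neg (fun h : s = j => hjs h.symm)]
          ring
  have hcount : S.card = ∑ d ∈ n.divisors, numCyclicSubgroups G d * (Nat.totient d - 1) := by
    rw [hS]
    exact card_S (NeZero.ne n) hexp
  rw [Matrix.charpoly, ← hcount]
  exact hdvd
end
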